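/- Let m ≥ 2, 2* = 2m/(m-1), and let f : [0,∞) → [0,∞) be continuous with f(0)=0 such that f(s)·s / F(s)^{(m+1)/(2m)} → 0 as s → ∞, where F(s) = ∫₀^s f(t) t dt. Then for every ε > 0 there exists C_ε > 0 such that F(s) ≤ C_ε + ε·s^{2*} and f(s) ≤ C_ε + ε·s^{2*-2} for all s ≥ 0. In particular f(s)/s^{2/(m-1)} → 0 as s → ∞. -/

import Mathlib

open MeasureTheory Filter

set_option maxHeartbeats 1000000

theorem stmt4 (m : ℕ) (hm : 2 ≤ m)
    (twoStar : ℝ) (h2 : twoStar = 2 * m / ((m:ℝ) - 1))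
    (f : ℝ → ℝ)
    (hf_cont : ContinuousOn f (Set.Ici 0))
    (hf_nonneg : ∀ s ∈ Set.Ici (0:ℝ), 0 ≤ f s)
    (hf0 : f 0 = 0)
    (F : ℝ → ℝ) (hF : ∀ s, F s = ∫ t in (0:ℝ)..s, f t * t)
    (hf4 : Tendsto (fun s : ℝ => f s * s / (F s) ^ (((m:ℝ) + 1) / (2 * (m:ℝ)))) atTop (nhds 0)) :
    (∀ ε > 0, ∃ C > 0, ∀ s ≥ (0:ℝ),
        F s ≤ C + ε * s ^ twoStar ∧ f s ≤ C + ε * s ^ (twoStar - 2)) ∧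
    Tendsto (fun s : ℝ => f s / s ^ (2 / ((m:ℝ) - 1))) atTop (nhds 0) := by
  have hM2 : (2:ℝ) ≤ (m:ℝ) := by exact_mod_cast hm
  have hM1 : (0:ℝ) < (m:ℝ) - 1 := by linarith
  have hM0 : (0:ℝ) < (m:ℝ) := by linarith
  set p : ℝ := ((m:ℝ) + 1) / (2 * (m:ℝ)) with hp_def
  set q : ℝ := 1 - p with hq_def
  have hts2 : 2 < twoStar := by
    rw [h2, lt_div_iff₀ hM1]; linarith
  have hts0 : 0 < twoStar := by linarith
  have hts_ne : twoStar ≠ 0 := ne_of_gt hts0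
  have hqts : q * twoStar = 1 := by
    rw [hq_def, hp_def, h2]
    field_simp
    ring
  have hq0 : 0 < q := by nlinarith
  have hp0 : 0 < p := by rw [hp_def]; positivity
  have hqp : q * (twoStar - 1) = p := by nlinarith [hqts, hq_def]
  -- extended integrand, continuous on all of ℝ
  set g : ℝ → ℝ := fun t => f (max t 0) * max t 0 with hg_def
  have hg_cont : Continuous g := by
    have h1 : Continuous fun t : ℝ => max t 0 := continuous_id.max continuous_const
    have h2' : ContinuousOn (fun t : ℝ => f (max t 0)) Set.univ :=
      hf_cont.comp h1.continuousOn (fun t _ => Set.mem_Ici.mpr (le_max_right t 0))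
    rw [continuousOn_univ] at h2'
    exact h2'.mul h1
  have hg_nonneg : ∀ t, 0 ≤ g t :=
    fun t => mul_nonneg (hf_nonneg _ (Set.mem_Ici.mpr (le_max_right t 0))) (le_max_right t 0)
  have hg_eq : ∀ t, 0 ≤ t → g t = f t * t := by
    intro t ht; simp only [hg_def, max_eq_left ht]
  set G : ℝ → ℝ := fun s => ∫ t in (0:ℝ)..s, g t with hG_def
  have hG_deriv : ∀ s, HasDerivAt G (g s) s :=
    fun s => (hg_cont.integral_hasStrictDerivAt 0 s).hasDerivAt
  have hFG : ∀ s, 0 ≤ s → F s = G s := by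
    intro s hs
    rw [hF s, hG_def]
    apply intervalIntegral.integral_congr
    intro t ht
    rw [Set.uIcc_of_le hs] at ht
    exact (hg_eq t ht.1).symm
  have hF_deriv : ∀ s, 0 < s → HasDerivAt F (f s * s) s := by
    intro s hs
    have heq : F =ᶠ[nhds s] G := by
      filter_upwards [Ioi_mem_nhds hs] with x hx
      exact hFG x (le_of_lt hx)
    have h := (hG_deriv s).congr_of_eventuallyEq heq
    rwa [hg_eq s hs.le] at h
  have hF_mono : MonotoneOn F (Set.Ici 0) := by
    intro a ha b hb hab
    rw [hFG a ha, hFG b hb, hG_def]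
    have h1 := intervalIntegral.integral_add_adjacent_intervals
      (hg_cont.intervalIntegrable (μ := volume) 0 a) (hg_cont.intervalIntegrable a b)
    have h2' := intervalIntegral.integral_nonneg (μ := volume) (f := g) hab (fun t _ => hg_nonneg t)
    simp only
    linarith
  have hF0 : F 0 = 0 := by rw [hFG 0 le_rfl, hG_def]; simp
  have hF_nonneg : ∀ s, 0 ≤ s → 0 ≤ F s := by
    intro s hs
    have := hF_mono (Set.self_mem_Ici) (Set.mem_Ici.mpr hs) hs
    linarith [hF0]
  -- reduce to the key growth estimate
  suffices key : ∀ ε > 0, ∃ C > 0, ∀ s ≥ (0:ℝ),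
      F s ≤ C + ε * s ^ twoStar ∧ f s ≤ C + ε * s ^ (twoStar - 2) by
    refine ⟨key, ?_⟩
    have hexp : 2 / ((m:ℝ) - 1) = twoStar - 2 := by
      rw [h2]; field_simp; ring
    simp only [hexp]
    rw [Metric.tendsto_nhds]
    intro ε hε
    obtain ⟨C, hC, hbound⟩ := key (ε/2) (half_pos hε)
    have hrate : Tendsto (fun s : ℝ => C / s ^ (twoStar - 2)) atTop (nhds 0) := by
      have h1 : Tendsto (fun s : ℝ => s ^ (twoStar - 2)) atTop atTop :=
        tendsto_rpow_atTop (by linarith)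
      have h2' := h1.inv_tendsto_atTop.const_mul C
      simpa [div_eq_mul_inv] using h2'
    filter_upwards [eventually_gt_atTop (0:ℝ),
      hrate.eventually (gt_mem_nhds (half_pos hε))] with s hs0 hrs
    have hsr : 0 < s ^ (twoStar - 2) := Real.rpow_pos_of_pos hs0 _
    have hfb := (hbound s hs0.le).2
    rw [Real.dist_eq, sub_zero,
      abs_of_nonneg (div_nonneg (hf_nonneg s hs0.le) hsr.le), div_lt_iff₀ hsr]
    rw [div_lt_iff₀ hsr] at hrs
    nlinarith [hsr]
  by_cases hpos : ∃ s₀ > (0:ℝ), 0 < F s₀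
  · obtain ⟨s₀, hs₀, hFs₀⟩ := hpos
    intro ε hε
    -- choice of δ
    set B1 : ℝ := (ε / 2 ^ twoStar) ^ (1 / twoStar) with hB1
    have h2ts : (0:ℝ) < 2 ^ twoStar := Real.rpow_pos_of_pos two_pos _
    have hB1pos : 0 < B1 := Real.rpow_pos_of_pos (div_pos hε h2ts) _
    have h2qts : (0:ℝ) < (2 * q) ^ (twoStar - 1) :=
      Real.rpow_pos_of_pos (by positivity) _
    set δ : ℝ := min (B1 / q) (min 1 (ε / (2 * q) ^ (twoStar - 1))) with hδ_def
    have hδpos : 0 < δ :=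
      lt_min (div_pos hB1pos hq0) (lt_min one_pos (div_pos hε h2qts))
    have hδ1 : δ * q ≤ B1 := by
      have := min_le_left (B1 / q) (min 1 (ε / (2 * q) ^ (twoStar - 1)))
      rw [← hδ_def] at this
      rw [← le_div_iff₀ hq0]
      exact this
    have hδ2 : δ ≤ 1 := le_trans (min_le_right _ _) (min_le_left _ _)
    have hδ3 : δ * (2 * q) ^ (twoStar - 1) ≤ ε := by
      have h := le_trans (min_le_right (B1 / q) _) (min_le_right 1 (ε / (2 * q) ^ (twoStar - 1)))
      rw [← hδ_def] at h
      rw [← le_div_iff₀ h2qts]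
      exact h
    -- threshold S
    obtain ⟨S₁, hS₁⟩ := eventually_atTop.mp (hf4.eventually (gt_mem_nhds hδpos))
    set S : ℝ := max S₁ (max s₀ 1) with hS_def
    have hS1' : (1:ℝ) ≤ S := le_trans (le_max_right s₀ 1) (le_max_right _ _)
    have hS_pos : 0 < S := lt_of_lt_of_le one_pos hS1'
    have hs₀S : s₀ ≤ S := le_trans (le_max_left s₀ 1) (le_max_right _ _)
    have hFpos : ∀ s, S ≤ s → 0 < F s := by
      intro s hs
      have h0s : (0:ℝ) ≤ s := le_trans hS_pos.le hs
      exact lt_of_lt_of_le hFs₀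
        (hF_mono (Set.mem_Ici.mpr hs₀.le) (Set.mem_Ici.mpr h0s) (hs₀S.trans hs))
    have hkey1 : ∀ s, S ≤ s → f s * s ≤ δ * F s ^ p := by
      intro s hs
      have h1 := hS₁ s (le_trans (le_max_left _ _) hs)
      have hFp : 0 < F s ^ p := Real.rpow_pos_of_pos (hFpos s hs) _
      rw [div_lt_iff₀ hFp] at h1
      linarith
    -- Gronwall-type estimate: F^q has derivative ≤ δ q on [S,∞)
    have hF_contOn : ContinuousOn F (Set.Ici S) := fun t ht =>
      ((hF_deriv t (lt_of_lt_of_le hS_pos ht)).continuousAt).continuousWithinAt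
    have hmono : MonotoneOn (fun t => δ * q * t - F t ^ q) (Set.Ici S) := by
      refine monotoneOn_of_hasDerivWithinAt_nonneg (convex_Ici S)
        (f' := fun t => δ * q - f t * t * q * F t ^ (q - 1)) ?_ ?_ ?_
      · exact (continuousOn_const.mul continuousOn_id).sub
          (hF_contOn.rpow_const (fun t _ => Or.inr hq0.le))
      · intro t ht
        rw [interior_Ici] at ht
        have hFt : 0 < F t := hFpos t (le_of_lt ht)
        have hd : HasDerivAt (fun u => F u ^ q) (f t * t * q * F t ^ (q - 1)) t :=
          (hF_deriv t (lt_trans hS_pos ht)).rpow_const (Or.inl (ne_of_gt hFt))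
        have hlin : HasDerivAt (fun u : ℝ => δ * q * u) (δ * q) t := by
          simpa using (hasDerivAt_id t).const_mul (δ * q)
        exact (hlin.sub hd).hasDerivWithinAt
      · intro t ht
        rw [interior_Ici] at ht
        have hFt : 0 < F t := hFpos t (le_of_lt ht)
        have hFp : 0 < F t ^ p := Real.rpow_pos_of_pos hFt _
        have h1 : f t * t ≤ δ * F t ^ p := hkey1 t (le_of_lt ht)
        have hq1 : q - 1 = -p := by rw [hq_def]; ring
        have h3 : F t ^ (q - 1) = (F t ^ p)⁻¹ := by
          rw [hq1, Real.rpow_neg hFt.le]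
        rw [sub_nonneg, h3]
        calc f t * t * q * (F t ^ p)⁻¹
            ≤ δ * F t ^ p * q * (F t ^ p)⁻¹ := by
              apply mul_le_mul_of_nonneg_right
                (mul_le_mul_of_nonneg_right h1 hq0.le) (inv_nonneg.mpr hFp.le)
          _ = δ * q := by field_simp
    have hFq_bound : ∀ s, S ≤ s → F s ^ q ≤ F S ^ q + δ * q * s := by
      intro s hs
      have h := hmono (Set.self_mem_Ici) (Set.mem_Ici.mpr hs) hs
      have hδqS : 0 ≤ δ * q * S := by positivity
      simp only at h
      linarith
    set A : ℝ := F S ^ q with hA_def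
    have hFS0 : 0 ≤ F S := hF_nonneg S hS_pos.le
    have hA0 : 0 ≤ A := Real.rpow_nonneg hFS0 _
    have hAts : A ^ twoStar = F S := by
      rw [hA_def, ← Real.rpow_mul hFS0, hqts, Real.rpow_one]
    have hAts0 : 0 ≤ A ^ twoStar := Real.rpow_nonneg hA0 _
    -- bound on F for s ≥ S
    have hFbound : ∀ s, S ≤ s →
        F s ≤ 2 ^ twoStar * A ^ twoStar + ε * s ^ twoStar := by
      intro s hs
      have hs0 : (0:ℝ) ≤ s := le_trans hS_pos.le hs
      have hFsnn : 0 ≤ F s := hF_nonneg s hs0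
      have hδqs : 0 ≤ δ * q * s := mul_nonneg (mul_nonneg hδpos.le hq0.le) hs0
      have h1 : F s ^ q ≤ A + δ * q * s := hFq_bound s hs
      have heq : F s = (F s ^ q) ^ twoStar := by
        rw [← Real.rpow_mul hFsnn, hqts, Real.rpow_one]
      have h3 : (F s ^ q) ^ twoStar ≤ (A + δ * q * s) ^ twoStar :=
        Real.rpow_le_rpow (Real.rpow_nonneg hFsnn _) h1 hts0.le
      have h4 : A + δ * q * s ≤ 2 * max A (δ * q * s) := by
        rcases le_total A (δ * q * s) with h|h
        · rw [max_eq_right h]; linarith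
        · rw [max_eq_left h]; linarith
      have h5 : (A + δ * q * s) ^ twoStar ≤ (2 * max A (δ * q * s)) ^ twoStar :=
        Real.rpow_le_rpow (add_nonneg hA0 hδqs) h4 hts0.le
      have h6 : (2 * max A (δ * q * s)) ^ twoStar
          = 2 ^ twoStar * (max A (δ * q * s)) ^ twoStar :=
        Real.mul_rpow (by norm_num) (le_max_of_le_left hA0)
      have h7 : (max A (δ * q * s)) ^ twoStar ≤ A ^ twoStar + (δ * q * s) ^ twoStar := by
        rcases le_total A (δ * q * s) with h|h
        · rw [max_eq_right h]; linarith [hAts0]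
        · rw [max_eq_left h]; linarith [Real.rpow_nonneg hδqs twoStar]
      have h8 : (δ * q * s) ^ twoStar = (δ * q) ^ twoStar * s ^ twoStar :=
        Real.mul_rpow (mul_nonneg hδpos.le hq0.le) hs0
      have h9 : (δ * q) ^ twoStar ≤ ε / 2 ^ twoStar := by
        have h9a : (δ * q) ^ twoStar ≤ B1 ^ twoStar :=
          Real.rpow_le_rpow (mul_nonneg hδpos.le hq0.le) hδ1 hts0.le
        have h9b : B1 ^ twoStar = ε / 2 ^ twoStar := by
          rw [hB1, one_div, Real.rpow_inv_rpow (div_nonneg hε.le h2ts.le) hts_ne]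
        linarith
      have hsts : 0 ≤ s ^ twoStar := Real.rpow_nonneg hs0 _
      have h10 : 2 ^ twoStar * ((δ * q) ^ twoStar * s ^ twoStar)
          ≤ 2 ^ twoStar * ((ε / 2 ^ twoStar) * s ^ twoStar) := by
        apply mul_le_mul_of_nonneg_left (mul_le_mul_of_nonneg_right h9 hsts) h2ts.le
      have h11 : 2 ^ twoStar * ((ε / 2 ^ twoStar) * s ^ twoStar) = ε * s ^ twoStar := by
        field_simp
      calc F s = (F s ^ q) ^ twoStar := heq
        _ ≤ (A + δ * q * s) ^ twoStar := h3
        _ ≤ (2 * max A (δ * q * s)) ^ twoStar := h5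
        _ = 2 ^ twoStar * (max A (δ * q * s)) ^ twoStar := h6
        _ ≤ 2 ^ twoStar * (A ^ twoStar + (δ * q * s) ^ twoStar) :=
            mul_le_mul_of_nonneg_left h7 h2ts.le
        _ = 2 ^ twoStar * A ^ twoStar + 2 ^ twoStar * ((δ * q) ^ twoStar * s ^ twoStar) := by
            rw [h8]; ring
        _ ≤ 2 ^ twoStar * A ^ twoStar + 2 ^ twoStar * ((ε / 2 ^ twoStar) * s ^ twoStar) := by
            linarith
        _ = 2 ^ twoStar * A ^ twoStar + ε * s ^ twoStar := by rw [h11]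
    -- bound on f for s large
    set S' : ℝ := max S (A / (δ * q)) with hS'_def
    have hS'S : S ≤ S' := le_max_left _ _
    have hfbound : ∀ s, S' ≤ s → f s ≤ ε * s ^ (twoStar - 2) := by
      intro s hs
      have hsS : S ≤ s := le_trans hS'S hs
      have hs1 : (1:ℝ) ≤ s := le_trans hS1' hsS
      have hs0 : (0:ℝ) < s := lt_of_lt_of_le one_pos hs1
      have h1 : f s * s ≤ δ * F s ^ p := hkey1 s hsS
      have hFsnn : 0 ≤ F s := (hFpos s hsS).le
      have hA_le : A ≤ δ * q * s := by
        have h := le_trans (le_max_right S (A / (δ * q))) hs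
        rwa [div_le_iff₀ (mul_pos hδpos hq0), mul_comm] at h
      have h3 : F s ^ q ≤ 2 * (δ * q) * s := by
        have := hFq_bound s hsS
        linarith
      have h2p : F s ^ p = (F s ^ q) ^ (twoStar - 1) := by
        rw [← Real.rpow_mul hFsnn, hqp]
      have h4 : F s ^ p ≤ (2 * (δ * q) * s) ^ (twoStar - 1) := by
        rw [h2p]
        exact Real.rpow_le_rpow (Real.rpow_nonneg hFsnn _) h3 (by linarith)
      have h5 : (2 * (δ * q) * s) ^ (twoStar - 1)
          = (2 * (δ * q)) ^ (twoStar - 1) * s ^ (twoStar - 1) :=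
        Real.mul_rpow (mul_nonneg (by norm_num) (mul_nonneg hδpos.le hq0.le)) hs0.le
      have h6 : (2 * (δ * q)) ^ (twoStar - 1) ≤ (2 * q) ^ (twoStar - 1) := by
        apply Real.rpow_le_rpow (mul_nonneg (by norm_num) (mul_nonneg hδpos.le hq0.le)) _ (by linarith)
        nlinarith [mul_le_mul_of_nonneg_right hδ2 hq0.le]
      have hsts1 : 0 ≤ s ^ (twoStar - 1) := Real.rpow_nonneg hs0.le _
      have h7 : f s * s ≤ ε * s ^ (twoStar - 1) := by
        calc f s * s ≤ δ * F s ^ p := h1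
          _ ≤ δ * ((2 * (δ * q)) ^ (twoStar - 1) * s ^ (twoStar - 1)) := by
              apply mul_le_mul_of_nonneg_left _ hδpos.le
              rw [← h5]; exact h4
          _ = δ * (2 * (δ * q)) ^ (twoStar - 1) * s ^ (twoStar - 1) := by ring
          _ ≤ δ * (2 * q) ^ (twoStar - 1) * s ^ (twoStar - 1) := by
              apply mul_le_mul_of_nonneg_right _ hsts1
              exact mul_le_mul_of_nonneg_left h6 hδpos.le
          _ ≤ ε * s ^ (twoStar - 1) := mul_le_mul_of_nonneg_right hδ3 hsts1
      have h8 : s ^ (twoStar - 1) = s ^ (twoStar - 2) * s := by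
        rw [← Real.rpow_add_one hs0.ne' (twoStar - 2)]
        congr 1
        ring
      rw [h8, ← mul_assoc] at h7
      exact le_of_mul_le_mul_right h7 hs0
    -- bound on f on the compact part
    obtain ⟨M, hM⟩ := (isCompact_Icc (a := (0:ℝ)) (b := S')).exists_bound_of_continuousOn
      (hf_cont.mono Set.Icc_subset_Ici_self)
    have h2ts1 : (1:ℝ) ≤ 2 ^ twoStar := by
      have := Real.rpow_le_rpow (by norm_num : (0:ℝ) ≤ 1) (by norm_num : (1:ℝ) ≤ 2) hts0.le
      rwa [Real.one_rpow] at this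
    have hCpos : (0:ℝ) < 2 ^ twoStar * A ^ twoStar + max M 0 + 1 := by
      have := mul_nonneg h2ts.le hAts0
      have := le_max_right M 0
      linarith
    refine ⟨2 ^ twoStar * A ^ twoStar + max M 0 + 1, hCpos, fun s hs => ?_⟩
    have hεs : 0 ≤ ε * s ^ twoStar := mul_nonneg hε.le (Real.rpow_nonneg hs _)
    have hεs2 : 0 ≤ ε * s ^ (twoStar - 2) := mul_nonneg hε.le (Real.rpow_nonneg hs _)
    have hM0' : (0:ℝ) ≤ max M 0 := le_max_right M 0
    constructor
    · rcases le_or_gt S s with h|h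
      · have := hFbound s h
        linarith
      · have h1 : F s ≤ F S :=
          hF_mono (Set.mem_Ici.mpr hs) (Set.mem_Ici.mpr hS_pos.le) h.le
        have h2' : F S ≤ 2 ^ twoStar * A ^ twoStar := by
          rw [← hAts]
          nlinarith [mul_le_mul_of_nonneg_right h2ts1 hAts0]
        linarith
    · rcases le_or_gt S' s with h|h
      · have := hfbound s h
        linarith
      · have hmem : s ∈ Set.Icc (0:ℝ) S' := ⟨hs, h.le⟩
        have h1 := hM s hmem
        have h2' : f s ≤ max M 0 := le_trans (le_trans (le_abs_self _) h1) (le_max_left M 0)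
        have h3' : 0 ≤ 2 ^ twoStar * A ^ twoStar := mul_nonneg h2ts.le hAts0
        linarith
  · -- trivial case : F ≡ 0 and f ≡ 0 on [0,∞)
    push_neg at hpos
    have hFzero : ∀ s, 0 ≤ s → F s = 0 := by
      intro s hs
      rcases eq_or_lt_of_le hs with h|h
      · rw [← h, hF0]
      · exact le_antisymm (hpos s h) (hF_nonneg s hs)
    have hfzero : ∀ s, 0 ≤ s → f s = 0 := by
      intro s hs
      rcases eq_or_lt_of_le hs with h|h
      · rw [← h, hf0]
      · have hd := hF_deriv s h
        have hz : HasDerivAt F 0 s := by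
          have heq : F =ᶠ[nhds s] fun _ => (0:ℝ) := by
            filter_upwards [Ioi_mem_nhds h] with x hx
            exact hFzero x (le_of_lt hx)
          exact (hasDerivAt_const s (0:ℝ)).congr_of_eventuallyEq heq
        have := hd.unique hz
        have hs' : s ≠ 0 := ne_of_gt h
        rcases mul_eq_zero.mp this with h'|h'
        · exact h'
        · exact absurd h' hs'
    intro ε hε
    refine ⟨1, one_pos, fun s hs => ?_⟩
    have h1 : 0 ≤ ε * s ^ twoStar := mul_nonneg hε.le (Real.rpow_nonneg hs _)
    have h2' : 0 ≤ ε * s ^ (twoStar - 2) := mul_nonneg hε.le (Real.rpow_nonneg hs _)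
    rw [hFzero s hs, hfzero s hs]
    constructor <;> linarith
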